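/- On the square grid ℤ², the set D = {(i, i) : 0 ≤ i ≤ n−1} (a diagonal of n ≥ 3 coins) is span-minimal, its span is the full n × n square {0,…,n−1}², and D admits no valid 2-adjacent move that preserves the span; in particular the anti-diagonal {(i, n−1−i) : 0 ≤ i ≤ n−1} has the same span but is not reachable from D. -/

import Mathlib

/-- A valid 2-adjacent move on board `G`: take a token at `q ∈ C`, place it at an
unoccupied `p` adjacent to at least 2 tokens of `C` other than `q`. -/
def ValidMove {P : Type*} [DecidableEq P] (G : SimpleGraph P) (C C' : Finset P) : Prop :=
  ∃ q ∈ C, ∃ p, p ∉ C ∧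
    (∃ a ∈ C.erase q, ∃ b ∈ C.erase q, a ≠ b ∧ G.Adj p a ∧ G.Adj p b) ∧
    C' = insert p (C.erase q)

/-- Reachability by a finite sequence of valid 2-adjacent moves. -/
def Reach {P : Type*} [DecidableEq P] (G : SimpleGraph P) : Finset P → Finset P → Prop :=
  Relation.ReflTransGen (ValidMove G)

/-- The span of a set of positions: the least superset closed under adding any
vertex adjacent to at least 2 vertices of the set. -/
def Span {P : Type*} (G : SimpleGraph P) (C : Set P) : Set P :=
  ⋂₀ {S : Set P | C ⊆ S ∧ ∀ p, (∃ a ∈ S, ∃ b ∈ S, a ≠ b ∧ G.Adj p a ∧ G.Adj p b) → p ∈ S}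


/-- The square grid on ℤ². -/
def Grid : SimpleGraph (ℤ × ℤ) where
  Adj p q := |p.1 - q.1| + |p.2 - q.2| = 1
  symm := ⟨by intro p q h; beta_reduce at h ⊢; rw [abs_sub_comm q.1 p.1, abs_sub_comm q.2 p.2]; exact h⟩
  loopless := ⟨by intro p; simp⟩

/-! ### Auxiliary span lemmas -/

def SClosed {P : Type*} (G : SimpleGraph P) (S : Set P) : Prop :=
  ∀ p, (∃ a ∈ S, ∃ b ∈ S, a ≠ b ∧ G.Adj p a ∧ G.Adj p b) → p ∈ S

lemma subset_Span {P : Type*} (G : SimpleGraph P) (C : Set P) : C ⊆ Span G C := by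
  intro x hx
  exact Set.mem_sInter.2 fun S hS => hS.1 hx

lemma Span_closed {P : Type*} (G : SimpleGraph P) (C : Set P) : SClosed G (Span G C) := by
  rintro p ⟨a, ha, b, hb, hab, hpa, hpb⟩
  exact Set.mem_sInter.2 fun S hS =>
    hS.2 p ⟨a, Set.mem_sInter.1 ha S hS, b, Set.mem_sInter.1 hb S hS, hab, hpa, hpb⟩

lemma Span_min {P : Type*} (G : SimpleGraph P) {C S : Set P} (h1 : C ⊆ S)
    (h2 : SClosed G S) : Span G C ⊆ S :=
  Set.sInter_subset_of_mem ⟨h1, h2⟩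

lemma validMove_span {P : Type*} [DecidableEq P] (G : SimpleGraph P) {C C' : Finset P}
    (h : ValidMove G C C') : Span G ↑C' ⊆ Span G ↑C := by
  obtain ⟨q, hq, p, hp, ⟨a, ha, b, hb, hab, hpa, hpb⟩, rfl⟩ := h
  apply Span_min
  · intro x hx
    simp only [Finset.coe_insert, Set.mem_insert_iff, Finset.mem_coe] at hx
    rcases hx with rfl | hx
    · exact Span_closed G _ _ ⟨a, subset_Span G _ (Finset.mem_of_mem_erase ha),
        b, subset_Span G _ (Finset.mem_of_mem_erase hb), hab, hpa, hpb⟩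
    · exact subset_Span G _ (Finset.mem_of_mem_erase hx)
  · exact Span_closed G _

lemma reach_span {P : Type*} [DecidableEq P] (G : SimpleGraph P) {C C' : Finset P}
    (h : Reach G C C') : Span G ↑C' ⊆ Span G ↑C := by
  induction h with
  | refl => exact le_refl _
  | tail _ h2 ih => exact (validMove_span G h2).trans ih

/-! ### Grid arithmetic -/

lemma grid_adj {p q : ℤ × ℤ} : Grid.Adj p q ↔
    (p.1 = q.1 ∧ (p.2 = q.2 + 1 ∨ p.2 = q.2 - 1)) ∨
    (p.2 = q.2 ∧ (p.1 = q.1 + 1 ∨ p.1 = q.1 - 1)) := by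
  show |p.1 - q.1| + |p.2 - q.2| = 1 ↔ _
  rcases abs_cases (p.1 - q.1) with ⟨h1, h2⟩ | ⟨h1, h2⟩ <;>
    rcases abs_cases (p.2 - q.2) with ⟨h3, h4⟩ | ⟨h3, h4⟩ <;> omega

def Sq (l r : ℤ) : Set (ℤ × ℤ) := Set.Icc l r ×ˢ Set.Icc l r

lemma mem_Sq {l r : ℤ} {p : ℤ × ℤ} :
    p ∈ Sq l r ↔ l ≤ p.1 ∧ p.1 ≤ r ∧ l ≤ p.2 ∧ p.2 ≤ r := by
  simp only [Sq, Set.mem_prod, Set.mem_Icc]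
  tauto

lemma Sq_closed (l r : ℤ) : SClosed Grid (Sq l r) := by
  rintro p ⟨a, ha, b, hb, hab, hpa, hpb⟩
  rw [grid_adj] at hpa hpb
  rw [mem_Sq] at ha hb ⊢
  have hne : ¬(a.1 = b.1 ∧ a.2 = b.2) := fun h => hab (Prod.ext_iff.2 h)
  omega

lemma two_Sq_closed (l1 r1 l2 r2 : ℤ) (hgap : r1 + 2 ≤ l2) :
    SClosed Grid (Sq l1 r1 ∪ Sq l2 r2) := by
  rintro p ⟨a, ha, b, hb, hab, hpa, hpb⟩
  rw [grid_adj] at hpa hpb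
  simp only [Set.mem_union, mem_Sq] at ha hb ⊢
  have hne : ¬(a.1 = b.1 ∧ a.2 = b.2) := fun h => hab (Prod.ext_iff.2 h)
  omega

lemma diag_fill {S : Set (ℤ × ℤ)} (hS : SClosed Grid S) (m : ℤ)
    (hd : ∀ i : ℤ, 0 ≤ i → i ≤ m → ((i, i) : ℤ × ℤ) ∈ S) :
    ∀ x y : ℤ, 0 ≤ x → x ≤ m → 0 ≤ y → y ≤ m → ((x, y) : ℤ × ℤ) ∈ S := by
  suffices H : ∀ d : ℕ, ∀ x y : ℤ, (x - y).natAbs = d →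
      0 ≤ x → x ≤ m → 0 ≤ y → y ≤ m → ((x, y) : ℤ × ℤ) ∈ S by
    intro x y hx1 hx2 hy1 hy2; exact H _ x y rfl hx1 hx2 hy1 hy2
  intro d
  induction d using Nat.strong_induction_on with
  | _ d ih =>
    intro x y hxy hx1 hx2 hy1 hy2
    rcases lt_trichotomy x y with h | rfl | h
    · apply hS
      refine ⟨(x + 1, y), ?_, (x, y - 1), ?_, ?_, ?_, ?_⟩
      · exact ih (x + 1 - y).natAbs (by omega) _ _ rfl (by omega) (by omega) (by omega) (by omega)
      · exact ih (x - (y - 1)).natAbs (by omega) _ _ rfl (by omega) (by omega) (by omega) (by omega)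
      · simp only [ne_eq, Prod.mk.injEq]; omega
      · rw [grid_adj]; dsimp only; omega
      · rw [grid_adj]; dsimp only; omega
    · exact hd x hx1 hx2
    · apply hS
      refine ⟨(x - 1, y), ?_, (x, y + 1), ?_, ?_, ?_, ?_⟩
      · exact ih (x - 1 - y).natAbs (by omega) _ _ rfl (by omega) (by omega) (by omega) (by omega)
      · exact ih (x - (y + 1)).natAbs (by omega) _ _ rfl (by omega) (by omega) (by omega) (by omega)
      · simp only [ne_eq, Prod.mk.injEq]; omega
      · rw [grid_adj]; dsimp only; omega
      · rw [grid_adj]; dsimp only; omega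

lemma antidiag_fill {S : Set (ℤ × ℤ)} (hS : SClosed Grid S) (m : ℤ)
    (hd : ∀ i : ℤ, 0 ≤ i → i ≤ m → ((i, m - i) : ℤ × ℤ) ∈ S) :
    ∀ x y : ℤ, 0 ≤ x → x ≤ m → 0 ≤ y → y ≤ m → ((x, y) : ℤ × ℤ) ∈ S := by
  suffices H : ∀ d : ℕ, ∀ x y : ℤ, (x + y - m).natAbs = d →
      0 ≤ x → x ≤ m → 0 ≤ y → y ≤ m → ((x, y) : ℤ × ℤ) ∈ S by
    intro x y hx1 hx2 hy1 hy2; exact H _ x y rfl hx1 hx2 hy1 hy2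
  intro d
  induction d using Nat.strong_induction_on with
  | _ d ih =>
    intro x y hxy hx1 hx2 hy1 hy2
    rcases lt_trichotomy (x + y) m with h | h | h
    · apply hS
      refine ⟨(x + 1, y), ?_, (x, y + 1), ?_, ?_, ?_, ?_⟩
      · exact ih (x + 1 + y - m).natAbs (by omega) _ _ rfl (by omega) (by omega) (by omega) (by omega)
      · exact ih (x + (y + 1) - m).natAbs (by omega) _ _ rfl (by omega) (by omega) (by omega) (by omega)
      · simp only [ne_eq, Prod.mk.injEq]; omega
      · rw [grid_adj]; dsimp only; omega
      · rw [grid_adj]; dsimp only; omega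
    · have hy : y = m - x := by omega
      rw [hy]; exact hd x hx1 hx2
    · apply hS
      refine ⟨(x - 1, y), ?_, (x, y - 1), ?_, ?_, ?_, ?_⟩
      · exact ih (x - 1 + y - m).natAbs (by omega) _ _ rfl (by omega) (by omega) (by omega) (by omega)
      · exact ih (x + (y - 1) - m).natAbs (by omega) _ _ rfl (by omega) (by omega) (by omega) (by omega)
      · simp only [ne_eq, Prod.mk.injEq]; omega
      · rw [grid_adj]; dsimp only; omega
      · rw [grid_adj]; dsimp only; omega

/-- The diagonal of `n ≥ 3` coins is span-minimal, its span is the full `n × n`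
square, every valid move strictly changes (reduces) the span, and the anti-diagonal,
which has the same span, is not reachable from it. -/
theorem diagonal_span_minimal (n : ℕ) (hn : 3 ≤ n)
    (D : Finset (ℤ × ℤ)) (hD : D = (Finset.range n).image fun i : ℕ => ((i : ℤ), (i : ℤ)))
    (A : Finset (ℤ × ℤ))
    (hA : A = (Finset.range n).image fun i : ℕ => ((i : ℤ), (n : ℤ) - 1 - (i : ℤ))) :
    Span Grid ↑D = Set.Icc (0 : ℤ) ((n : ℤ) - 1) ×ˢ Set.Icc (0 : ℤ) ((n : ℤ) - 1) ∧
    (∀ t ∈ D, Span Grid (↑D \ {t}) ≠ Span Grid ↑D) ∧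
    (∀ D' : Finset (ℤ × ℤ), ValidMove Grid D D' → Span Grid ↑D' ≠ Span Grid ↑D) ∧
    Span Grid ↑A = Span Grid ↑D ∧
    ¬Reach Grid D A := by
  -- membership facts
  have memD : ∀ i : ℤ, 0 ≤ i → i ≤ (n : ℤ) - 1 → ((i, i) : ℤ × ℤ) ∈ D := by
    intro i h1 h2
    rw [hD, Finset.mem_image]
    exact ⟨i.toNat, Finset.mem_range.2 (by omega), by simp [Prod.ext_iff]; omega⟩
  have Dmem : ∀ p ∈ D, ∃ i : ℤ, 0 ≤ i ∧ i ≤ (n : ℤ) - 1 ∧ p = (i, i) := by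
    intro p hp
    rw [hD, Finset.mem_image] at hp
    obtain ⟨j, hj, rfl⟩ := hp
    rw [Finset.mem_range] at hj
    exact ⟨j, by omega, by omega, rfl⟩
  have memA : ∀ i : ℤ, 0 ≤ i → i ≤ (n : ℤ) - 1 →
      ((i, (n : ℤ) - 1 - i) : ℤ × ℤ) ∈ A := by
    intro i h1 h2
    rw [hA, Finset.mem_image]
    exact ⟨i.toNat, Finset.mem_range.2 (by omega), by simp [Prod.ext_iff]; omega⟩
  have Amem : ∀ p ∈ A, ∃ i : ℤ, 0 ≤ i ∧ i ≤ (n : ℤ) - 1 ∧ p = (i, (n : ℤ) - 1 - i) := by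
    intro p hp
    rw [hA, Finset.mem_image] at hp
    obtain ⟨j, hj, rfl⟩ := hp
    rw [Finset.mem_range] at hj
    exact ⟨j, by omega, by omega, rfl⟩
  -- Span of D is the full square
  have spanD : Span Grid ↑D = Sq 0 ((n : ℤ) - 1) := by
    apply Set.Subset.antisymm
    · apply Span_min
      · intro p hp
        obtain ⟨i, h1, h2, rfl⟩ := Dmem p hp
        rw [mem_Sq]; exact ⟨h1, h2, h1, h2⟩
      · exact Sq_closed _ _
    · rintro ⟨x, y⟩ hp
      rw [mem_Sq] at hp
      exact diag_fill (Span_closed Grid _) ((n : ℤ) - 1)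
        (fun i h1 h2 => subset_Span Grid _ (memD i h1 h2)) x y hp.1 hp.2.1 hp.2.2.1 hp.2.2.2
  have spanA : Span Grid ↑A = Sq 0 ((n : ℤ) - 1) := by
    apply Set.Subset.antisymm
    · apply Span_min
      · intro p hp
        obtain ⟨i, h1, h2, rfl⟩ := Amem p hp
        rw [mem_Sq]
        refine ⟨h1, h2, by omega, by omega⟩
      · exact Sq_closed _ _
    · rintro ⟨x, y⟩ hp
      rw [mem_Sq] at hp
      exact antidiag_fill (Span_closed Grid _) ((n : ℤ) - 1)
        (fun i h1 h2 => subset_Span Grid _ (memA i h1 h2)) x y hp.1 hp.2.1 hp.2.2.1 hp.2.2.2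
  -- key: after a valid move, the span misses (k,k)
  have move_miss : ∀ D' : Finset (ℤ × ℤ), ValidMove Grid D D' →
      ∃ k : ℤ, 0 ≤ k ∧ k ≤ (n : ℤ) - 1 ∧
        Span Grid ↑D' ⊆ Sq 0 (k - 1) ∪ Sq (k + 1) ((n : ℤ) - 1) := by
    intro D' hmv
    obtain ⟨q, hq, p, hp, ⟨a, ha, b, hb, hab, hpa, hpb⟩, rfl⟩ := hmv
    obtain ⟨k, hk1, hk2, rfl⟩ := Dmem q hq
    refine ⟨k, hk1, hk2, ?_⟩
    apply Span_min
    · intro x hx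
      simp only [Finset.coe_insert, Set.mem_insert_iff, Finset.mem_coe] at hx
      obtain ⟨i, hi1, hi2, hia⟩ := Dmem a (Finset.mem_of_mem_erase ha)
      obtain ⟨j, hj1, hj2, hjb⟩ := Dmem b (Finset.mem_of_mem_erase hb)
      have hik : i ≠ k := by
        intro h; subst h; exact (Finset.ne_of_mem_erase ha) hia
      have hjk : j ≠ k := by
        intro h; subst h; exact (Finset.ne_of_mem_erase hb) hjb
      rcases hx with rfl | hx
      · have hij : i ≠ j := by
          intro h; apply hab; rw [hia, hjb, h]
        rw [grid_adj] at hpa hpb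
        rw [hia] at hpa; rw [hjb] at hpb
        simp only [Set.mem_union, mem_Sq]
        dsimp only at hpa hpb
        omega
      · obtain ⟨l, hl1, hl2, rfl⟩ := Dmem x (Finset.mem_of_mem_erase hx)
        have hlk : l ≠ k := by
          intro h; subst h; exact (Finset.ne_of_mem_erase hx) rfl
        simp only [Set.mem_union, mem_Sq]
        omega
    · exact two_Sq_closed _ _ _ _ (by omega)
  have kk_not : ∀ k : ℤ, ((k, k) : ℤ × ℤ) ∉ Sq 0 (k - 1) ∪ Sq (k + 1) ((n : ℤ) - 1) := by
    intro k h
    simp only [Set.mem_union, mem_Sq] at h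
    omega
  refine ⟨spanD, ?_, ?_, spanA.trans spanD.symm, ?_⟩
  · -- span-minimality
    intro t ht heq
    obtain ⟨k, hk1, hk2, rfl⟩ := Dmem t ht
    have hsub : Span Grid (↑D \ {((k, k) : ℤ × ℤ)}) ⊆
        Sq 0 (k - 1) ∪ Sq (k + 1) ((n : ℤ) - 1) := by
      apply Span_min
      · rintro x ⟨hx, hne⟩
        obtain ⟨l, hl1, hl2, rfl⟩ := Dmem x hx
        have : l ≠ k := by
          intro h; apply hne; rw [h]; rfl
        simp only [Set.mem_union, mem_Sq]
        omega
      · exact two_Sq_closed _ _ _ _ (by omega)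
    have hkk : ((k, k) : ℤ × ℤ) ∈ Span Grid (↑D \ {((k, k) : ℤ × ℤ)}) := by
      rw [heq, spanD, mem_Sq]; exact ⟨hk1, hk2, hk1, hk2⟩
    exact kk_not k (hsub hkk)
  · -- no span-preserving move
    intro D' hmv heq
    obtain ⟨k, hk1, hk2, hsub⟩ := move_miss D' hmv
    have hkk : ((k, k) : ℤ × ℤ) ∈ Span Grid ↑D' := by
      rw [heq, spanD, mem_Sq]; exact ⟨hk1, hk2, hk1, hk2⟩
    exact kk_not k (hsub hkk)
  · -- unreachability
    intro hreach
    rcases Relation.ReflTransGen.cases_head hreach with heqDA | ⟨c, hmv, hrc⟩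
    · have h0 : ((0, 0) : ℤ × ℤ) ∈ A := heqDA ▸ memD 0 (by omega) (by omega)
      obtain ⟨i, hi1, hi2, hi⟩ := Amem _ h0
      rw [Prod.ext_iff] at hi
      dsimp at hi
      omega
    · obtain ⟨k, hk1, hk2, hsub⟩ := move_miss c hmv
      have hAs : Span Grid ↑A ⊆ Span Grid ↑c := reach_span Grid hrc
      have hkk : ((k, k) : ℤ × ℤ) ∈ Span Grid ↑A := by
        rw [spanA, mem_Sq]; exact ⟨hk1, hk2, hk1, hk2⟩
      exact kk_not k (hsub (hAs hkk))
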